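/- Let G be a nonabelian finite thin p-group (p prime). Then for every i ≥ 1, the quotient γ_i(G)/γ_{i+1}(G) of consecutive terms of the lower central series is an elementary abelian p-group of order at most p², i.e., it has exponent dividing p and cardinality at most p². -/

import Mathlib

open Subgroup
open scoped commutatorElement


/-- A finite `p`-group is *thin* if every antichain in the lattice of its normal subgroups
contains at most `p + 1` elements. -/
def IsThinPGroup (p : ℕ) (G : Type*) [Group G] : Prop :=
  ∀ S : Set (Subgroup G), (∀ N ∈ S, N.Normal) → IsAntichain (· ≤ ·) S → S.ncard ≤ p + 1

lemma thinAux_comm_pow {H : Type*} [Group H] (a b : H) (hc : ⁅a, b⁆ ∈ Subgroup.center H) :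
    ∀ n : ℕ, ⁅a ^ n, b⁆ = ⁅a, b⁆ ^ n := by
  intro n
  induction n with
  | zero => simp
  | succ n ih =>
    have key : ⁅a * a ^ n, b⁆ = a * ⁅a ^ n, b⁆ * a⁻¹ * ⁅a, b⁆ := by
      simp only [commutatorElement_def]; group
    have hcen : a * ⁅a ^ n, b⁆ * a⁻¹ = ⁅a, b⁆ ^ n := by
      rw [ih, Subgroup.mem_center_iff.mp (pow_mem hc n) a, mul_assoc, mul_inv_cancel, mul_one]
    rw [pow_succ', key, hcen, ← pow_succ]

lemma thinAux_rel_shift {A : Type*} [CommGroup A] (u v : A) {a b s t : ℤ}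
    (h : u ^ a * v ^ b = u ^ s * v ^ t) : u ^ (a - s) * v ^ (b - t) = 1 := by
  have key : u ^ (a - s) * v ^ (b - t) = (u ^ a * v ^ b) * ((u ^ s)⁻¹ * (v ^ t)⁻¹) := by
    rw [zpow_sub, zpow_sub]; ac_rfl
  rw [key, h]
  have : (u ^ s * v ^ t) * ((u ^ s)⁻¹ * (v ^ t)⁻¹) = (u ^ s * (u ^ s)⁻¹) * (v ^ t * (v ^ t)⁻¹) := by
    ac_rfl
  rw [this, mul_inv_cancel, mul_inv_cancel, one_mul]

lemma thinAux_pullback {p : ℕ} {G : Type*} [Group G] (hthin : IsThinPGroup p G)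
    {Q : Type*} [Group Q] (π : G →* Q) (hsurj : Function.Surjective π)
    (F : Finset (Subgroup Q)) (hnorm : ∀ X ∈ F, X.Normal)
    (hanti : IsAntichain (· ≤ ·) (↑F : Set (Subgroup Q))) : F.card ≤ p + 1 := by
  have h := hthin ((Subgroup.comap π) '' ↑F) ?_ ?_
  · rwa [Set.ncard_image_of_injective _ (Subgroup.comap_injective hsurj),
      Set.ncard_coe_finset] at h
  · rintro N ⟨X, hX, rfl⟩
    exact (hnorm X hX).comap π
  · rintro _ ⟨X, hX, rfl⟩ _ ⟨Y, hY, rfl⟩ hne hle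
    exact hanti hX hY (fun h => hne (by rw [h]))
      ((Subgroup.comap_le_comap_of_surjective hsurj).mp hle)

lemma thinAux_central {G : Type*} [Group G] (m : ℕ) (z : G)
    (hz : z ∈ (⊤ : Subgroup G).lowerCentralSeries m) :
    (QuotientGroup.mk z : G ⧸ (⊤ : Subgroup G).lowerCentralSeries (m + 1)) ∈ Subgroup.center _ := by
  rw [Subgroup.mem_center_iff]
  intro h
  obtain ⟨h, rfl⟩ := QuotientGroup.mk_surjective h
  have hmem : (⁅z, h⁆ : G) ∈ (⊤ : Subgroup G).lowerCentralSeries (m + 1) := by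
    rw [Subgroup.lowerCentralSeries_succ]
    exact Subgroup.commutator_mem_commutator hz (Subgroup.mem_top h)
  have h1 : (QuotientGroup.mk ⁅z, h⁆ : G ⧸ (⊤ : Subgroup G).lowerCentralSeries (m + 1)) = 1 :=
    (QuotientGroup.eq_one_iff _).mpr hmem
  rw [show (QuotientGroup.mk ⁅z, h⁆ : G ⧸ (⊤ : Subgroup G).lowerCentralSeries (m + 1)) =
      ⁅(QuotientGroup.mk z : G ⧸ (⊤ : Subgroup G).lowerCentralSeries (m + 1)), QuotientGroup.mk h⁆ from
    map_commutatorElement (QuotientGroup.mk' _) z h] at h1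
  exact ((commutatorElement_eq_one_iff_commute.mp h1).symm).eq

lemma thinAux_base {p : ℕ} (hp : p.Prime) {G : Type*} [Group G] [Finite G]
    (hpG : IsPGroup p G) (hthin : IsThinPGroup p G)
    (hna : ∃ a b : G, a * b ≠ b * a) :
    ∀ x : G, x ^ p ∈ (⊤ : Subgroup G).lowerCentralSeries 1 := by
  classical
  haveI : Fact p.Prime := ⟨hp⟩
  by_contra hcon
  push_neg at hcon
  obtain ⟨g, hg⟩ := hcon
  set A := G ⧸ (⊤ : Subgroup G).lowerCentralSeries 1 with hA
  set π := QuotientGroup.mk' ((⊤ : Subgroup G).lowerCentralSeries 1) with hπ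
  have hcomm : ∀ a b : A, a * b = b * a := by
    intro a b
    obtain ⟨x, rfl⟩ := QuotientGroup.mk_surjective a
    obtain ⟨y, rfl⟩ := QuotientGroup.mk_surjective b
    have h1 : (QuotientGroup.mk (x * y) : A) = QuotientGroup.mk (y * x) := by
      rw [QuotientGroup.eq]
      have he : (x * y)⁻¹ * (y * x) = ⁅y⁻¹, x⁻¹⁆ := by
        simp only [commutatorElement_def]; group
      rw [he, Subgroup.lowerCentralSeries_one, _root_.commutator_def]
      exact Subgroup.commutator_mem_commutator (Subgroup.mem_top _) (Subgroup.mem_top _)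
    exact h1
  letI : CommGroup A := { (inferInstance : Group A) with mul_comm := hcomm }
  have hpA : IsPGroup p A := hpG.to_quotient _
  have horder : ∀ a : A, ∃ k : ℕ, orderOf a = p ^ k := by
    intro a
    obtain ⟨k, hk⟩ := hpA a
    obtain ⟨j, _, hje⟩ := (Nat.dvd_prime_pow hp).mp (orderOf_dvd_of_pow_eq_one hk)
    exact ⟨j, hje⟩
  obtain ⟨u₀, hu₀max⟩ := Finite.exists_max (fun a : A => orderOf a)
  obtain ⟨a0, ha0⟩ := horder u₀
  have hgb : (π g) ^ p ≠ 1 := by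
    intro h
    apply hg
    rw [← map_pow] at h
    exact (QuotientGroup.eq_one_iff _).mp h
  obtain ⟨b0, hb0⟩ := horder (π g)
  have hb02 : 2 ≤ b0 := by
    by_contra hlt
    push_neg at hlt
    apply hgb
    have hdvd : orderOf (π g) ∣ p := by
      rw [hb0]
      calc p ^ b0 ∣ p ^ 1 := pow_dvd_pow p (by omega)
      _ = p := pow_one p
    exact orderOf_dvd_iff_pow_eq_one.mp hdvd
  have h2a : 2 ≤ a0 := by
    have h1 := hu₀max (π g)
    simp only [hb0, ha0] at h1
    have := (Nat.pow_le_pow_iff_right hp.one_lt).mp h1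
    omega
  have hmaxdvd : ∀ a : A, orderOf a ∣ p ^ a0 := by
    intro a
    obtain ⟨k, hk⟩ := horder a
    have h1 := hu₀max a
    simp only [hk, ha0] at h1 ⊢
    exact pow_dvd_pow p ((Nat.pow_le_pow_iff_right hp.one_lt).mp h1)
  by_cases hcyc : ∀ a : A, a ∈ Subgroup.zpowers u₀
  · -- cyclic case : G is abelian, contradiction
    obtain ⟨x0, y0, hxy⟩ := hna
    apply hxy
    obtain ⟨g₀, hg₀⟩ := QuotientGroup.mk'_surjective _ u₀
    have h12 : (⊤ : Subgroup G).lowerCentralSeries 1 ≤ (⊤ : Subgroup G).lowerCentralSeries 2 := by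
      rw [Subgroup.lowerCentralSeries_one, _root_.commutator_def, Subgroup.commutator_le]
      intro x _ y _
      have hdec : ∀ x : G, ∃ (i : ℤ) (c : G), c ∈ (⊤ : Subgroup G).lowerCentralSeries 1 ∧ x = g₀ ^ i * c := by
        intro x
        obtain ⟨i, hi⟩ := Subgroup.mem_zpowers_iff.mp (hcyc (π x))
        refine ⟨i, (g₀ ^ i)⁻¹ * x, ?_, by group⟩
        have hpi : (π (g₀ ^ i) : A) = π x := by rw [map_zpow, hg₀, hi]
        exact (QuotientGroup.eq).mp hpi
      obtain ⟨i, c, hc, rfl⟩ := hdec x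
      obtain ⟨j, d, hd, rfl⟩ := hdec y
      set ρ := QuotientGroup.mk' ((⊤ : Subgroup G).lowerCentralSeries 2) with hρ
      have hρc : ρ c ∈ Subgroup.center _ := thinAux_central 1 c hc
      have hρd : ρ d ∈ Subgroup.center _ := thinAux_central 1 d hd
      have hcomm2 : Commute (ρ (g₀ ^ i * c)) (ρ (g₀ ^ j * d)) := by
        rw [map_mul, map_mul, map_zpow, map_zpow]
        have hbase : Commute ((ρ g₀) ^ i) ((ρ g₀) ^ j) := (Commute.refl (ρ g₀)).zpow_zpow i j
        have h2 : Commute ((ρ g₀) ^ i) (ρ d) := Subgroup.mem_center_iff.mp hρd _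
        have h3 : Commute (ρ c) ((ρ g₀) ^ j * ρ d) := (Subgroup.mem_center_iff.mp hρc _).symm
        exact Commute.mul_left (hbase.mul_right h2) h3
      have h1 : ρ ⁅g₀ ^ i * c, g₀ ^ j * d⁆ = 1 := by
        rw [map_commutatorElement]
        exact commutatorElement_eq_one_iff_commute.mpr hcomm2
      exact (QuotientGroup.eq_one_iff _).mp h1
    have heq : (⊤ : Subgroup G).lowerCentralSeries 1 = (⊤ : Subgroup G).lowerCentralSeries 2 :=
      le_antisymm h12 (Subgroup.lowerCentralSeries_antitone ⊤ (by omega))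
    have hall : ∀ k, (⊤ : Subgroup G).lowerCentralSeries (k + 1) = (⊤ : Subgroup G).lowerCentralSeries 1 := by
      intro k
      induction k with
      | zero => rfl
      | succ k ihk =>
        rw [Subgroup.lowerCentralSeries_succ, ihk]
        exact ((Subgroup.lowerCentralSeries_succ ⊤ 1).symm.trans heq.symm)
    haveI : Group.IsNilpotent G := hpG.isNilpotent
    obtain ⟨nn, hnn⟩ := Subgroup.nilpotent_iff_lowerCentralSeries.mp this
    have hbot : (⊤ : Subgroup G).lowerCentralSeries 1 = ⊥ := by
      cases nn with
      | zero =>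
        have htop : (⊤ : Subgroup G) = ⊥ := hnn
        have : (⊤ : Subgroup G).lowerCentralSeries 1 ≤ ⊥ := htop ▸ le_top
        exact le_antisymm this bot_le
      | succ m => rw [← hall m]; exact hnn
    have hc1 : (⁅x0, y0⁆ : G) = 1 := by
      have hmem : (⁅x0, y0⁆ : G) ∈ (⊤ : Subgroup G).lowerCentralSeries 1 := by
        rw [Subgroup.lowerCentralSeries_one, _root_.commutator_def]
        exact Subgroup.commutator_mem_commutator (Subgroup.mem_top _) (Subgroup.mem_top _)
      rw [hbot] at hmem
      exact Subgroup.mem_bot.mp hmem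
    exact (commutatorElement_eq_one_iff_commute.mp hc1).eq
  · -- noncyclic case : build an antichain of size p + 2
    push_neg at hcyc
    obtain ⟨w, hw⟩ := hcyc
    set Zu := Subgroup.zpowers u₀ with hZu
    have hQe : ∃ k, w ^ p ^ k ∈ Zu := by
      obtain ⟨k, hk⟩ := hpA w
      exact ⟨k, by rw [hk]; exact Zu.one_mem⟩
    have hk₀pos : 0 < Nat.find hQe := by
      rcases Nat.eq_zero_or_pos (Nat.find hQe) with h | h
      · exfalso
        have hsp := Nat.find_spec hQe
        rw [h, pow_zero, pow_one] at hsp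
        exact hw hsp
      · exact h
    set v₀ := w ^ p ^ (Nat.find hQe - 1) with hv₀
    have hv₀n : v₀ ∉ Zu := Nat.find_min hQe (by omega)
    have hv₀p : v₀ ^ p ∈ Zu := by
      rw [hv₀, ← pow_mul, ← pow_succ, Nat.sub_add_cancel hk₀pos]
      exact Nat.find_spec hQe
    obtain ⟨m, hm⟩ := Subgroup.mem_zpowers_iff.mp hv₀p
    have hdvd : (p : ℤ) ∣ m := by
      have h1 : v₀ ^ (p ^ a0) = 1 := orderOf_dvd_iff_pow_eq_one.mp (hmaxdvd v₀)
      have h2 : u₀ ^ (m * ((p ^ (a0 - 1) : ℕ) : ℤ)) = (1 : A) := by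
        rw [zpow_mul, zpow_natCast, hm, ← pow_mul]
        have hpp : p * p ^ (a0 - 1) = p ^ a0 := by
          rw [← pow_succ']
          congr 1
          omega
        rw [hpp, h1]
      have h3 : ((p : ℤ) ^ a0) ∣ m * ((p ^ (a0 - 1) : ℕ) : ℤ) := by
        have h4 := orderOf_dvd_iff_zpow_eq_one.mpr h2
        rwa [ha0, Nat.cast_pow] at h4
      have h4 : (p : ℤ) ^ (a0 - 1) * (p : ℤ) ∣ (p : ℤ) ^ (a0 - 1) * m := by
        calc (p : ℤ) ^ (a0 - 1) * (p : ℤ) = (p : ℤ) ^ a0 := by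
              rw [← pow_succ]; congr 1; omega
        _ ∣ m * ((p ^ (a0 - 1) : ℕ) : ℤ) := h3
        _ = (p : ℤ) ^ (a0 - 1) * m := by push_cast; ring
      have hne : ((p : ℤ) ^ (a0 - 1)) ≠ 0 := pow_ne_zero _ (by exact_mod_cast hp.pos.ne')
      exact (mul_dvd_mul_iff_left hne).mp h4
    obtain ⟨m', rfl⟩ := hdvd
    set v := v₀ * u₀ ^ (-m') with hv
    have hvp : v ^ p = 1 := by
      rw [hv, mul_pow]
      have h2 : (u₀ ^ (-m')) ^ p = u₀ ^ (-((p : ℤ) * m')) := by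
        rw [← zpow_natCast (u₀ ^ (-m')) p, ← zpow_mul]
        congr 1
        ring
      rw [h2, ← hm, ← zpow_add, add_neg_cancel, zpow_zero]
    have hvZ : v ∉ Zu := by
      intro hmem
      apply hv₀n
      have hveq : v₀ = v * u₀ ^ m' := by rw [hv]; group
      rw [hveq]
      exact mul_mem hmem (zpow_mem (Subgroup.mem_zpowers u₀) m')
    have hv1 : v ≠ 1 := fun h => hvZ (h ▸ Zu.one_mem)
    have hordv : orderOf v = p := orderOf_eq_prime hvp hv1
    set u := u₀ ^ (p ^ (a0 - 2)) with hu
    have hordu : orderOf u = p ^ 2 := by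
      rw [hu, orderOf_pow, ha0, Nat.gcd_eq_right (pow_dvd_pow p (by omega)),
        Nat.pow_div (by omega) hp.pos]
      congr 1
      omega
    have huZ : u ∈ Zu := pow_mem (Subgroup.mem_zpowers u₀) _
    have hvu : v ∉ Subgroup.zpowers u := fun h => hvZ (Subgroup.zpowers_le.mpr huZ h)
    have hp2 : (2 : ℤ) ≤ (p : ℤ) := by exact_mod_cast hp.two_le
    have hpn1 : ¬ ((p : ℤ) ∣ 1) := by
      intro h
      have := Int.le_of_dvd one_pos h
      omega
    have hind : ∀ s t : ℤ, u ^ s * v ^ t = 1 → ((p : ℤ) ^ 2 ∣ s ∧ (p : ℤ) ∣ t) := by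
      intro s t hst
      by_cases hz : v ^ (-t) = (1 : A)
      · have hvt : v ^ t = 1 := by
          have h5 := congrArg (·⁻¹) hz
          simpa [zpow_neg] using h5
        have hus : u ^ s = 1 := by
          rw [hvt, mul_one] at hst
          exact hst
        constructor
        · have h6 := orderOf_dvd_iff_zpow_eq_one.mpr hus
          rwa [hordu, Nat.cast_pow] at h6
        · have h6 := orderOf_dvd_iff_zpow_eq_one.mpr hvt
          rwa [hordv] at h6
      · exfalso
        have hustv : u ^ s = v ^ (-t) := by
          rw [zpow_neg]
          exact eq_inv_of_mul_eq_one_left hst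
        have hnd : ¬ ((p : ℤ) ∣ (-t)) := by
          intro hdt
          apply hz
          apply orderOf_dvd_iff_zpow_eq_one.mp
          rwa [hordv]
        have hcop : IsCoprime (p : ℤ) (-t) :=
          (Prime.coprime_iff_not_dvd (Nat.prime_iff_prime_int.mp hp)).mpr hnd
        obtain ⟨x, y, hxy2⟩ := hcop
        have hveq : v = (v ^ (-t)) ^ y := by
          calc v = v ^ (x * (p : ℤ) + y * (-t)) := by rw [hxy2, zpow_one]
          _ = (v ^ (p : ℤ)) ^ x * (v ^ (-t)) ^ y := by
              rw [zpow_add, mul_comm x, mul_comm y, zpow_mul, zpow_mul]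
          _ = (v ^ (-t)) ^ y := by
              rw [show (v ^ (p : ℤ)) = 1 by rw [zpow_natCast, hvp], one_zpow, one_mul]
        have hveq2 : v = (u ^ s) ^ y := by rw [hustv]; exact hveq
        apply hvu
        exact Subgroup.mem_zpowers_iff.mpr ⟨s * y, by rw [zpow_mul]; exact hveq2.symm⟩
    have hmaster : ∀ s t s' t' : ℤ,
        Subgroup.zpowers (u ^ s * v ^ t) ≤ Subgroup.zpowers (u ^ s' * v ^ t') →
        ∃ m : ℤ, (p : ℤ) ^ 2 ∣ s' * m - s ∧ (p : ℤ) ∣ t' * m - t := by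
      intro s t s' t' hle
      obtain ⟨m, hm2⟩ := Subgroup.mem_zpowers_iff.mp (hle (Subgroup.mem_zpowers _))
      rw [mul_zpow, ← zpow_mul, ← zpow_mul] at hm2
      exact ⟨m, hind _ _ (thinAux_rel_shift u v hm2)⟩
    have hC : ∀ k k' : ℕ, k < p → k' < p →
        Subgroup.zpowers (u ^ (1 : ℤ) * v ^ (k : ℤ)) ≤
          Subgroup.zpowers (u ^ (1 : ℤ) * v ^ (k' : ℤ)) → k = k' := by
      intro k k' hk hk' hle
      obtain ⟨m, h1, h2⟩ := hmaster _ _ _ _ hle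
      have hpm : (p : ℤ) ∣ m - 1 := by
        have h5 : (p : ℤ) ∣ (p : ℤ) ^ 2 := dvd_pow_self _ two_ne_zero
        have h6 := h5.trans h1
        simpa using h6
      have h3 : (p : ℤ) ∣ ((k' : ℤ) - k) := by
        have hh : ((k' : ℤ) - k) = ((k' : ℤ) * m - k) - (k' : ℤ) * (m - 1) := by ring
        rw [hh]
        exact dvd_sub h2 (Dvd.dvd.mul_left hpm _)
      have h4 : (p : ℤ).natAbs ∣ ((k' : ℤ) - k).natAbs := Int.natAbs_dvd_natAbs.mpr h3
      simp only [Int.natAbs_natCast] at h4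
      have h5 : ((k' : ℤ) - k).natAbs < p := by omega
      have h6 := Nat.eq_zero_of_dvd_of_lt h4 h5
      omega
    have hDC : ∀ k : ℕ, ¬ (Subgroup.zpowers (u ^ (0 : ℤ) * v ^ (1 : ℤ)) ≤
        Subgroup.zpowers (u ^ (1 : ℤ) * v ^ (k : ℤ))) := by
      intro k hle
      obtain ⟨m, h1, h2⟩ := hmaster _ _ _ _ hle
      have hpm : (p : ℤ) ∣ m := by
        have h5 := (dvd_pow_self (p : ℤ) two_ne_zero).trans h1
        simpa using h5
      apply hpn1
      have hh : (1 : ℤ) = (k : ℤ) * m - ((k : ℤ) * m - 1) := by ring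
      rw [hh]
      exact dvd_sub (hpm.mul_left _) h2
    have hCD : ∀ k : ℕ, ¬ (Subgroup.zpowers (u ^ (1 : ℤ) * v ^ (k : ℤ)) ≤
        Subgroup.zpowers (u ^ (0 : ℤ) * v ^ (1 : ℤ))) := by
      intro k hle
      obtain ⟨m, h1, _⟩ := hmaster _ _ _ _ hle
      have h5 := (dvd_pow_self (p : ℤ) two_ne_zero).trans h1
      rw [zero_mul, zero_sub, dvd_neg] at h5
      exact hpn1 h5
    have hEC : ∀ k : ℕ, ¬ (Subgroup.zpowers (u ^ ((p : ℕ) : ℤ) * v ^ (1 : ℤ)) ≤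
        Subgroup.zpowers (u ^ (1 : ℤ) * v ^ (k : ℤ))) := by
      intro k hle
      obtain ⟨m, h1, h2⟩ := hmaster _ _ _ _ hle
      have hpm : (p : ℤ) ∣ m := by
        have hp' : (p : ℤ) ∣ 1 * m - (p : ℤ) := (dvd_pow_self _ two_ne_zero).trans h1
        have hh : m = (1 * m - (p : ℤ)) + (p : ℤ) := by ring
        rw [hh]
        exact dvd_add hp' dvd_rfl
      apply hpn1
      have hh : (1 : ℤ) = (k : ℤ) * m - ((k : ℤ) * m - 1) := by ring
      rw [hh]
      exact dvd_sub (hpm.mul_left _) h2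
    have hCE : ∀ k : ℕ, ¬ (Subgroup.zpowers (u ^ (1 : ℤ) * v ^ (k : ℤ)) ≤
        Subgroup.zpowers (u ^ ((p : ℕ) : ℤ) * v ^ (1 : ℤ))) := by
      intro k hle
      obtain ⟨m, h1, _⟩ := hmaster _ _ _ _ hle
      apply hpn1
      have hp' : (p : ℤ) ∣ (p : ℤ) * m - 1 := (dvd_pow_self _ two_ne_zero).trans h1
      have hh : (1 : ℤ) = (p : ℤ) * m - ((p : ℤ) * m - 1) := by ring
      rw [hh]
      exact dvd_sub (Dvd.intro m rfl) hp'
    have hDE : ¬ (Subgroup.zpowers (u ^ (0 : ℤ) * v ^ (1 : ℤ)) ≤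
        Subgroup.zpowers (u ^ ((p : ℕ) : ℤ) * v ^ (1 : ℤ))) := by
      intro hle
      obtain ⟨m, h1, h2⟩ := hmaster _ _ _ _ hle
      have hpm : (p : ℤ) ∣ m := by
        rw [sub_zero] at h1
        have h4 : (p : ℤ) * (p : ℤ) ∣ (p : ℤ) * m := by rw [← pow_two]; exact h1
        exact (mul_dvd_mul_iff_left (by omega : (p : ℤ) ≠ 0)).mp h4
      apply hpn1
      have hh : (1 : ℤ) = m - (1 * m - 1) := by ring
      rw [hh]
      exact dvd_sub hpm h2
    have hED : ¬ (Subgroup.zpowers (u ^ ((p : ℕ) : ℤ) * v ^ (1 : ℤ)) ≤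
        Subgroup.zpowers (u ^ (0 : ℤ) * v ^ (1 : ℤ))) := by
      intro hle
      obtain ⟨m, h1, _⟩ := hmaster _ _ _ _ hle
      rw [zero_mul, zero_sub, dvd_neg] at h1
      have h4 : (p : ℤ) * (p : ℤ) ∣ (p : ℤ) * 1 := by rw [mul_one, ← pow_two]; exact h1
      exact hpn1 ((mul_dvd_mul_iff_left (by omega : (p : ℤ) ≠ 0)).mp h4)
    set D := Subgroup.zpowers (u ^ (0 : ℤ) * v ^ (1 : ℤ)) with hD
    set E := Subgroup.zpowers (u ^ ((p : ℕ) : ℤ) * v ^ (1 : ℤ)) with hE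
    set Cf : ℕ → Subgroup A := fun k => Subgroup.zpowers (u ^ (1 : ℤ) * v ^ (k : ℤ)) with hCf
    set F : Finset (Subgroup A) := ((Finset.range p).image Cf) ∪ {D, E} with hF
    have hDEne : D ≠ E := fun h => hDE (le_of_eq h)
    have hinj : Set.InjOn Cf ↑(Finset.range p) := by
      intro k hk k' hk' h
      simp only [Finset.coe_range, Set.mem_Iio] at hk hk'
      exact hC k k' hk hk' (le_of_eq h)
    have hdisj : Disjoint ((Finset.range p).image Cf) ({D, E} : Finset (Subgroup A)) := by
      rw [Finset.disjoint_right]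
      intro X hX hX2
      obtain ⟨k, hk, rfl⟩ := Finset.mem_image.mp hX2
      simp only [Finset.mem_insert, Finset.mem_singleton] at hX
      rcases hX with h | h
      · exact hDC k (le_of_eq h.symm)
      · exact hEC k (le_of_eq h.symm)
    have hcard : F.card = p + 2 := by
      rw [hF, Finset.card_union_of_disjoint hdisj, Finset.card_image_of_injOn hinj,
        Finset.card_range, Finset.card_insert_of_notMem (by simpa using hDEne),
        Finset.card_singleton]
    have hmemF : ∀ X ∈ F, (∃ k, k < p ∧ X = Cf k) ∨ X = D ∨ X = E := by
      intro X hX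
      rw [hF, Finset.mem_union] at hX
      rcases hX with hX | hX
      · obtain ⟨k, hk, rfl⟩ := Finset.mem_image.mp hX
        exact Or.inl ⟨k, Finset.mem_range.mp hk, rfl⟩
      · simp only [Finset.mem_insert, Finset.mem_singleton] at hX
        exact Or.inr hX
    have hanti : IsAntichain (· ≤ ·) (↑F : Set (Subgroup A)) := by
      intro X hX Y hY hne hle
      rcases hmemF X (Finset.mem_coe.mp hX) with ⟨k, hk, rfl⟩ | rfl | rfl <;>
        rcases hmemF Y (Finset.mem_coe.mp hY) with ⟨k', hk', rfl⟩ | rfl | rfl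
      · exact hne (congrArg Cf (hC k k' hk hk' hle))
      · exact hCD k hle
      · exact hCE k hle
      · exact hDC k' hle
      · exact hne rfl
      · exact hDE hle
      · exact hEC k' hle
      · exact hED hle
      · exact hne rfl
    have hnormA : ∀ X : Subgroup A, X.Normal := fun X => ⟨fun n hn g => by
      have hgn : g * n * g⁻¹ = n := by
        rw [mul_comm g n, mul_assoc, mul_inv_cancel, mul_one]
      rwa [hgn]⟩
    have hle := thinAux_pullback hthin π (QuotientGroup.mk'_surjective _) F
      (fun X _ => hnormA X) hanti
    rw [hcard] at hle
    omega

lemma thinAux_step {p : ℕ} {G : Type*} [Group G] (n : ℕ)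
    (ih : ∀ x ∈ (⊤ : Subgroup G).lowerCentralSeries n, x ^ p ∈ (⊤ : Subgroup G).lowerCentralSeries (n + 1)) :
    ∀ y ∈ (⊤ : Subgroup G).lowerCentralSeries (n + 1), y ^ p ∈ (⊤ : Subgroup G).lowerCentralSeries (n + 2) := by
  set ρ := QuotientGroup.mk' ((⊤ : Subgroup G).lowerCentralSeries (n + 2)) with hρ
  let M : Subgroup (G ⧸ (⊤ : Subgroup G).lowerCentralSeries (n + 2)) :=
    { carrier := {h | h ∈ Subgroup.center _ ∧ h ^ p = 1}
      one_mem' := ⟨Subgroup.one_mem _, one_pow p⟩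
      mul_mem' := by
        rintro a b ⟨ha, hap⟩ ⟨hb, hbp⟩
        refine ⟨Subgroup.mul_mem _ ha hb, ?_⟩
        rw [(show Commute a b from (Subgroup.mem_center_iff.mp ha b).symm).mul_pow,
          hap, hbp, one_mul]
      inv_mem' := by
        rintro a ⟨ha, hap⟩
        exact ⟨Subgroup.inv_mem _ ha, by rw [inv_pow, hap, inv_one]⟩ }
  have hM : (⊤ : Subgroup G).lowerCentralSeries (n + 1) ≤ Subgroup.comap ρ M := by
    rw [Subgroup.lowerCentralSeries_succ]
    show ⁅(⊤ : Subgroup G).lowerCentralSeries n, (⊤ : Subgroup G)⁆ ≤ Subgroup.comap ρ M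
    rw [Subgroup.commutator_le]
    intro z hz g _
    have hcc : (⁅z, g⁆ : G) ∈ (⊤ : Subgroup G).lowerCentralSeries (n + 1) := by
      rw [Subgroup.lowerCentralSeries_succ]
      exact Subgroup.commutator_mem_commutator hz (Subgroup.mem_top g)
    have hccen : ρ ⁅z, g⁆ ∈ Subgroup.center _ := thinAux_central (n + 1) ⁅z, g⁆ hcc
    have hzp : ρ (z ^ p) ∈ Subgroup.center _ := thinAux_central (n + 1) (z ^ p) (ih z hz)
    have hcen2 : ⁅ρ z, ρ g⁆ ∈ Subgroup.center _ := by
      rw [← map_commutatorElement]; exact hccen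
    have h1 : ⁅(ρ z) ^ p, ρ g⁆ = ⁅ρ z, ρ g⁆ ^ p := thinAux_comm_pow _ _ hcen2 p
    have h2 : ⁅(ρ z) ^ p, ρ g⁆ = 1 := by
      rw [← map_pow]
      exact commutatorElement_eq_one_iff_commute.mpr (Subgroup.mem_center_iff.mp hzp (ρ g)).symm
    refine Subgroup.mem_comap.mpr ⟨hccen, ?_⟩
    rw [map_commutatorElement, ← h1, h2]
  intro y hy
  have h3 := Subgroup.mem_comap.mp (hM hy)
  have h4 : (ρ y) ^ p = 1 := h3.2
  rw [← map_pow] at h4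
  exact (QuotientGroup.eq_one_iff _).mp h4

/-- In a nonabelian finite thin `p`-group, every quotient `γ_i(G)/γ_{i+1}(G)` of consecutive
terms of the lower central series (`i ≥ 1`, i.e. all `n ≥ 0` in Mathlib's indexing) is
elementary abelian of order at most `p ^ 2`. -/
theorem thin_p_group_lcs_quotients_elementary_abelian
    {p : ℕ} (hp : p.Prime) {G : Type*} [Group G] [Finite G]
    (hpG : IsPGroup p G) (hthin : IsThinPGroup p G)
    (hna : ∃ a b : G, a * b ≠ b * a) :
    ∀ n : ℕ,
      Nat.card (↥((⊤ : Subgroup G).lowerCentralSeries n) ⧸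
          ((⊤ : Subgroup G).lowerCentralSeries (n + 1)).subgroupOf ((⊤ : Subgroup G).lowerCentralSeries n)) ≤ p ^ 2 ∧
      ∀ x : ↥((⊤ : Subgroup G).lowerCentralSeries n) ⧸
          ((⊤ : Subgroup G).lowerCentralSeries (n + 1)).subgroupOf ((⊤ : Subgroup G).lowerCentralSeries n), x ^ p = 1 := by
  classical
  haveI : Fact p.Prime := ⟨hp⟩
  have key : ∀ n : ℕ, ∀ x ∈ (⊤ : Subgroup G).lowerCentralSeries n, x ^ p ∈ (⊤ : Subgroup G).lowerCentralSeries (n + 1) := by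
    intro n
    induction n with
    | zero => exact fun x _ => thinAux_base hp hpG hthin hna x
    | succ n ih => exact thinAux_step n ih
  intro n
  have hexp : ∀ x : ↥((⊤ : Subgroup G).lowerCentralSeries n) ⧸
      ((⊤ : Subgroup G).lowerCentralSeries (n + 1)).subgroupOf ((⊤ : Subgroup G).lowerCentralSeries n), x ^ p = 1 := by
    intro x
    obtain ⟨y, rfl⟩ := QuotientGroup.mk_surjective x
    rw [← QuotientGroup.mk_pow]
    apply (QuotientGroup.eq_one_iff _).mpr
    rw [Subgroup.mem_subgroupOf]
    have hco : (((y ^ p : ↥((⊤ : Subgroup G).lowerCentralSeries n))) : G) = (y : G) ^ p := by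
      push_cast
      rfl
    rw [hco]
    exact key n (y : G) y.2
  refine ⟨?_, hexp⟩
  by_contra hgt
  push_neg at hgt
  set K := (⊤ : Subgroup G).lowerCentralSeries (n + 1) with hK
  set π := QuotientGroup.mk' K with hπ
  set W : Subgroup (G ⧸ K) := ((⊤ : Subgroup G).lowerCentralSeries n).map π with hW
  have hVW : Nat.card (↥((⊤ : Subgroup G).lowerCentralSeries n) ⧸ K.subgroupOf ((⊤ : Subgroup G).lowerCentralSeries n))
      = Nat.card W := by
    set f : ↥((⊤ : Subgroup G).lowerCentralSeries n) →* G ⧸ K := π.comp ((⊤ : Subgroup G).lowerCentralSeries n).subtype with hf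
    have hker : K.subgroupOf ((⊤ : Subgroup G).lowerCentralSeries n) = f.ker := by
      ext x
      simp only [hf, MonoidHom.mem_ker, MonoidHom.comp_apply, Subgroup.mem_subgroupOf]
      exact ((QuotientGroup.eq_one_iff _)).symm
    have hrange : f.range = W := by
      rw [hf, MonoidHom.range_comp, Subgroup.range_subtype]
    calc Nat.card (↥((⊤ : Subgroup G).lowerCentralSeries n) ⧸ K.subgroupOf ((⊤ : Subgroup G).lowerCentralSeries n))
        = Nat.card (↥((⊤ : Subgroup G).lowerCentralSeries n) ⧸ f.ker) :=
          Nat.card_congr (QuotientGroup.quotientMulEquivOfEq hker).toEquiv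
      _ = Nat.card f.range := Nat.card_congr (QuotientGroup.quotientKerEquivRange f).toEquiv
      _ = Nat.card W := by rw [hrange]
  rw [hVW] at hgt
  have hWcent : ∀ x ∈ W, x ∈ Subgroup.center (G ⧸ K) := by
    intro x hx
    obtain ⟨z, hz, rfl⟩ := hx
    exact thinAux_central n z hz
  have hWp : ∀ x ∈ W, x ^ p = 1 := by
    intro x hx
    obtain ⟨z, hz, rfl⟩ := hx
    rw [← map_pow]
    exact (QuotientGroup.eq_one_iff _).mpr (key n z hz)
  have hWpg : IsPGroup p ↥W := (hpG.to_quotient K).to_subgroup W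
  obtain ⟨kW, hkW⟩ := IsPGroup.iff_card.mp hWpg
  have hW3 : p ^ 3 ≤ Nat.card W := by
    rw [hkW] at hgt ⊢
    have h2 : 2 < kW := (Nat.pow_lt_pow_iff_right hp.one_lt).mp hgt
    exact Nat.pow_le_pow_right hp.pos (by omega)
  letI : Fintype (G ⧸ K) := Fintype.ofFinite _
  have hsubcard : ∀ U : Subgroup (G ⧸ K),
      (Finset.univ.filter (fun x => x ∈ U)).card = Nat.card U := by
    intro U
    rw [Nat.card_eq_fintype_card, Fintype.card_subtype]
  set T : Finset (G ⧸ K) := Finset.univ.filter (fun x => x ∈ W ∧ x ≠ 1) with hT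
  have hTcard : T.card = Nat.card W - 1 := by
    have h2 : T = (Finset.univ.filter (fun x => x ∈ W)).erase 1 := by
      ext x
      simp [hT, Finset.mem_erase, and_comm]
    rw [h2, Finset.card_erase_of_mem (by simp [W.one_mem]), hsubcard]
  set F : Finset (Subgroup (G ⧸ K)) := T.image (fun x => Subgroup.zpowers x) with hF
  have hTmem : ∀ x ∈ T, x ∈ W ∧ x ≠ 1 := by
    intro x hx
    simpa [hT] using hx
  have hgenp : ∀ x ∈ T, orderOf x = p := by
    intro x hx
    obtain ⟨h1, h2⟩ := hTmem x hx
    exact orderOf_eq_prime (hWp x h1) h2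
  have hFcardp : ∀ X ∈ F, Nat.card X = p := by
    intro X hX
    obtain ⟨x, hx, rfl⟩ := Finset.mem_image.mp hX
    rw [Nat.card_zpowers, hgenp x hx]
  have hfib : T.card ≤ (p - 1) * F.card := by
    apply Finset.card_le_mul_card_image
    intro L hL
    have hLp : Nat.card L = p := hFcardp L hL
    calc (T.filter (fun x => Subgroup.zpowers x = L)).card
        ≤ ((Finset.univ.filter (fun x => x ∈ L)).erase 1).card := by
          apply Finset.card_le_card
          intro y hy
          simp only [Finset.mem_filter] at hy
          obtain ⟨hyT, hyL⟩ := hy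
          obtain ⟨_, hy1⟩ := hTmem y hyT
          rw [Finset.mem_erase]
          refine ⟨hy1, ?_⟩
          simp only [Finset.mem_filter, Finset.mem_univ, true_and]
          rw [← hyL]
          exact Subgroup.mem_zpowers y
      _ = p - 1 := by
          rw [Finset.card_erase_of_mem (by simp [L.one_mem]), hsubcard, hLp]
  have hFcard : p + 2 ≤ F.card := by
    have h3 : p ^ 3 - 1 ≤ T.card := by omega
    have heq3 : (p - 1) * (p ^ 2 + p + 1) = p ^ 3 - 1 := by
      obtain ⟨q, rfl⟩ : ∃ q, p = q + 1 := ⟨p - 1, by have := hp.two_le; omega⟩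
      have hr : (q + 1) ^ 3 = q ^ 3 + 3 * q ^ 2 + 3 * q + 1 := by ring
      have hr2 : (q + 1) - 1 = q := by omega
      rw [hr, hr2, Nat.add_sub_cancel]
      ring
    have h4 : (p - 1) * (p ^ 2 + p + 1) ≤ (p - 1) * F.card := by
      rw [heq3]
      exact le_trans h3 hfib
    have h5 : p ^ 2 + p + 1 ≤ F.card :=
      Nat.le_of_mul_le_mul_left h4 (by have := hp.two_le; omega)
    have h6 : 1 ≤ p ^ 2 := Nat.one_le_pow _ _ hp.pos
    omega
  have hanti : IsAntichain (· ≤ ·) (↑F : Set (Subgroup (G ⧸ K))) := by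
    intro X hX Y hY hne hle
    apply hne
    have hXp : Nat.card X = p := hFcardp X (Finset.mem_coe.mp hX)
    have hYp : Nat.card Y = p := hFcardp Y (Finset.mem_coe.mp hY)
    have hsub : (X : Set (G ⧸ K)) ⊆ (Y : Set (G ⧸ K)) := hle
    have hcardle : (Y : Set (G ⧸ K)).ncard ≤ (X : Set (G ⧸ K)).ncard := by
      rw [← Nat.card_coe_set_eq, ← Nat.card_coe_set_eq]
      simp only [SetLike.coe_sort_coe]
      rw [hXp, hYp]
    exact SetLike.coe_injective (Set.eq_of_subset_of_ncard_le hsub hcardle (Set.toFinite _))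
  have hnorm : ∀ X ∈ F, X.Normal := by
    intro X hX
    obtain ⟨x, hx, rfl⟩ := Finset.mem_image.mp hX
    have hcen := hWcent x (hTmem x hx).1
    constructor
    intro a ha g
    have haZ : a ∈ Subgroup.center (G ⧸ K) := (Subgroup.zpowers_le.mpr hcen) ha
    have hgag : g * a * g⁻¹ = a := by
      rw [Subgroup.mem_center_iff.mp haZ g, mul_assoc, mul_inv_cancel, mul_one]
    rwa [hgag]
  have hple := thinAux_pullback hthin π (QuotientGroup.mk'_surjective _) F hnorm hanti
  omega
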